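/- For 0 < p < ∞, the space Λᵖ₂(1) coincides with Lᵖ(ℝ²): for every measurable f on ℝ², ∫_{ℝ²} |f(x)|ᵖ dx = ∫_{ℝ₊²} (f₂*(x))ᵖ dx. -/

import Mathlib

open MeasureTheory Set ENNReal Filter

/-- Classical decreasing rearrangement of an `ℝ≥0∞`-valued function. -/
noncomputable def decRe {α : Type*} [MeasurableSpace α] (μ : Measure α)
    (g : α → ℝ≥0∞) (t : ℝ) : ℝ≥0∞ :=
  sInf {l : ℝ≥0∞ | μ {x | l < g x} ≤ ENNReal.ofReal t}

/-- `φ_E(x)`: the measure of the `x`-section of `E`. -/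
noncomputable def phiSec (E : Set (ℝ × ℝ)) (x : ℝ) : ℝ≥0∞ :=
  volume {y : ℝ | (x, y) ∈ E}

/-- The two-dimensional decreasing rearrangement `E*` of a set `E ⊆ ℝ²`. -/
def starSet (E : Set (ℝ × ℝ)) : Set (ℝ × ℝ) :=
  {p | 0 < p.1 ∧ 0 < p.2 ∧ ENNReal.ofReal p.2 < decRe volume (phiSec E) p.1}

/-- The two-dimensional decreasing rearrangement `f₂*` of a function (layer-cake formula). -/
noncomputable def rearr2 (f : ℝ × ℝ → ℝ) (x : ℝ × ℝ) : ℝ≥0∞ :=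
  ∫⁻ t in Set.Ioi (0 : ℝ), (starSet {p | t < |f p|}).indicator (fun _ => (1 : ℝ≥0∞)) x

/-- The open positive quadrant `ℝ₊²`. -/
def Quad : Set (ℝ × ℝ) := Set.Ioi 0 ×ˢ Set.Ioi 0

lemma lt_decRe_iff {α : Type*} [MeasurableSpace α] (μ : Measure α)
    (g : α → ℝ≥0∞) (s : ℝ) (c : ℝ≥0∞) :
    c < decRe μ g s ↔ ∃ b, c < b ∧ ENNReal.ofReal s < μ {x | b < g x} := by
  constructor
  · intro h
    obtain ⟨b, hcb, hbD⟩ := exists_between h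
    refine ⟨b, hcb, ?_⟩
    by_contra hb
    push_neg at hb
    exact absurd (sInf_le (show b ∈ {l : ℝ≥0∞ | μ {x | l < g x} ≤ ENNReal.ofReal s} from hb))
      hbD.not_ge
  · rintro ⟨b, hcb, hb⟩
    refine hcb.trans_le (le_sInf fun l hl => ?_)
    by_contra hlb
    push_neg at hlb
    exact absurd (le_trans (measure_mono fun x hx => lt_of_le_of_lt hlb.le hx) hl) hb.not_ge

lemma lt_decRe_iff_rat {α : Type*} [MeasurableSpace α] (μ : Measure α)
    (g : α → ℝ≥0∞) (s y : ℝ) :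
    ENNReal.ofReal y < decRe μ g s ↔
      ∃ q : ℚ, 0 < (q : ℝ) ∧ ENNReal.ofReal y < ENNReal.ofReal (q : ℝ) ∧
        ENNReal.ofReal s < μ {x | ENNReal.ofReal (q : ℝ) < g x} := by
  rw [lt_decRe_iff]
  constructor
  · rintro ⟨b, hcb, hb⟩
    have hex : ∃ q : ℚ, 0 < (q : ℝ) ∧ ENNReal.ofReal y < ENNReal.ofReal (q : ℝ) ∧
        ENNReal.ofReal (q : ℝ) ≤ b := by
      rcases eq_or_ne b ⊤ with rfl | hbne
      · obtain ⟨q, hq⟩ := exists_rat_gt (max y 0)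
        have hq0 : 0 < (q : ℝ) := lt_of_le_of_lt (le_max_right _ _) hq
        exact ⟨q, hq0, (ENNReal.ofReal_lt_ofReal_iff hq0).2
          (lt_of_le_of_lt (le_max_left y 0) hq), le_top⟩
      · have hb0 : b ≠ 0 := fun h => by simp [h] at hcb
        have hbt : 0 < b.toReal := ENNReal.toReal_pos hb0 hbne
        have hyt : max y 0 < b.toReal := by
          rcases le_or_gt y 0 with hy | hy
          · simpa [max_eq_right hy] using hbt
          · have := (ENNReal.ofReal_lt_iff_lt_toReal hy.le hbne).1 hcb
            simp [max_eq_left hy.le, this]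
        obtain ⟨q, hq1, hq2⟩ := exists_rat_btwn hyt
        have hq0 : 0 < (q : ℝ) := lt_of_le_of_lt (le_max_right _ _) hq1
        refine ⟨q, hq0, (ENNReal.ofReal_lt_ofReal_iff hq0).2
          (lt_of_le_of_lt (le_max_left y 0) hq1), ?_⟩
        exact le_of_lt ((ENNReal.ofReal_lt_iff_lt_toReal hq0.le hbne).2 hq2)
    obtain ⟨q, hq0, hq1, hq2⟩ := hex
    refine ⟨q, hq0, hq1, lt_of_lt_of_le hb (measure_mono fun x hx => lt_of_le_of_lt hq2 hx)⟩
  · rintro ⟨q, hq0, h1, h2⟩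
    exact ⟨ENNReal.ofReal (q:ℝ), h1, h2⟩

lemma vol_slice (l : ℝ≥0∞) :
    volume {y : ℝ | 0 < y ∧ ENNReal.ofReal y < l} = l := by
  rcases eq_or_ne l ⊤ with rfl | hl
  · have : {y : ℝ | 0 < y ∧ ENNReal.ofReal y < ⊤} = Ioi 0 := by
      ext y; simp [ofReal_lt_top, mem_Ioi]
    rw [this]; simp
  · have : {y : ℝ | 0 < y ∧ ENNReal.ofReal y < l} = Ioo 0 l.toReal := by
      ext y
      simp only [mem_setOf_eq, mem_Ioo, and_congr_right_iff]
      intro hy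
      exact ENNReal.ofReal_lt_iff_lt_toReal hy.le hl
    rw [this, Real.volume_Ioo, sub_zero, ENNReal.ofReal_toReal hl]

lemma vol_sandwich {S T : Set ℝ} (hT : T ⊆ Ioi 0) (hST : S ⊆ T)
    (h : ∀ y ∈ T, Ioo 0 y ⊆ S) : volume S = volume T := by
  refine le_antisymm (measure_mono hST) ?_
  set c : ℝ≥0∞ := ⨆ y ∈ T, ENNReal.ofReal y with hc
  have hcS : c ≤ volume S := by
    refine iSup₂_le fun y hy => ?_
    calc ENNReal.ofReal y = volume (Ioo 0 y) := by rw [Real.volume_Ioo, sub_zero]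
      _ ≤ volume S := measure_mono (h y hy)
  rcases eq_or_ne c ⊤ with hc' | hc'
  · exact le_trans le_top (hc' ▸ hcS)
  · have hTsub : T ⊆ Ioc 0 c.toReal := by
      intro y hy
      refine ⟨hT hy, ?_⟩
      have : ENNReal.ofReal y ≤ c := le_iSup₂ (f := fun y _ => ENNReal.ofReal y) y hy
      exact (ENNReal.ofReal_le_iff_le_toReal hc').1 this
    calc volume T ≤ volume (Ioc 0 c.toReal) := measure_mono hTsub
      _ = ENNReal.ofReal c.toReal := by rw [Real.volume_Ioc, sub_zero]
      _ = c := ENNReal.ofReal_toReal hc'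
      _ ≤ volume S := hcS

lemma lemF {p : ℝ} (hp : 0 < p) {c : ℝ} (hc : 0 ≤ c) :
    ∫⁻ t in Ioo 0 c, ENNReal.ofReal (p * t ^ (p - 1)) = ENNReal.ofReal (c ^ p) := by
  rcases eq_or_lt_of_le hc with rfl | hc
  · simp [Real.zero_rpow hp.ne']
  have hr : (-1 : ℝ) < p - 1 := by linarith
  have hint : IntegrableOn (fun t : ℝ => p * t ^ (p - 1)) (Ioo 0 c) := by
    have h1 : IntervalIntegrable (fun t : ℝ => t ^ (p - 1)) volume 0 c :=
      intervalIntegral.intervalIntegrable_rpow' hr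
    have h2 : IntegrableOn (fun t : ℝ => t ^ (p - 1)) (Ioc 0 c) :=
      (intervalIntegrable_iff_integrableOn_Ioc_of_le hc.le).1 h1
    exact (h2.mono_set Ioo_subset_Ioc_self).const_mul p
  have hnn : 0 ≤ᵐ[volume.restrict (Ioo 0 c)] fun t : ℝ => p * t ^ (p - 1) := by
    filter_upwards [ae_restrict_mem measurableSet_Ioo] with t ht
    exact mul_nonneg hp.le (Real.rpow_nonneg ht.1.le _)
  rw [← ofReal_integral_eq_lintegral_ofReal hint hnn]
  congr 1
  have : ∫ t in Ioo 0 c, p * t ^ (p - 1) = ∫ t in Ioc 0 c, p * t ^ (p - 1) :=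
    (integral_Ioc_eq_integral_Ioo).symm
  rw [this, ← intervalIntegral.integral_of_le hc.le, intervalIntegral.integral_const_mul,
    integral_rpow (Or.inl hr)]
  have hp1 : p - 1 + 1 = p := by ring
  rw [hp1, Real.zero_rpow hp.ne']
  field_simp
  simp

lemma lintF_top {p : ℝ} (hp : 0 < p) :
    ∫⁻ t in Ioi (0:ℝ), ENNReal.ofReal (p * t ^ (p - 1)) = ⊤ := by
  refine top_unique ?_
  have key : ∀ c : ℝ, 0 ≤ c →
      ENNReal.ofReal (c ^ p) ≤ ∫⁻ t in Ioi (0:ℝ), ENNReal.ofReal (p * t ^ (p - 1)) := by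
    intro c hc
    rw [← lemF hp hc]
    exact lintegral_mono_set Ioo_subset_Ioi_self
  have h1 : Tendsto (fun c : ℝ => ENNReal.ofReal (c ^ p)) atTop (nhds ⊤) :=
    tendsto_ofReal_atTop.comp (tendsto_rpow_atTop hp)
  refine le_of_tendsto h1 ?_
  filter_upwards [eventually_ge_atTop (0:ℝ)] with c hc using key c hc

lemma lemB {p : ℝ} (hp : 0 < p) {T : Set ℝ} (hT : T ⊆ Ioi 0)
    (hdc : ∀ a ∈ T, Ioo 0 a ⊆ T) :
    (∫⁻ t in Ioi (0:ℝ), T.indicator (fun _ => (1:ℝ≥0∞)) t) ^ p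
      = ∫⁻ t in Ioi (0:ℝ), T.indicator (fun _ => (1:ℝ≥0∞)) t
          * ENNReal.ofReal (p * t ^ (p - 1)) := by
  rcases T.eq_empty_or_nonempty with rfl | hne
  · simp only [Set.indicator_empty, lintegral_const, zero_mul, lintegral_zero]
    exact ENNReal.zero_rpow_of_pos hp
  rcases em (BddAbove T) with hbdd | hbdd
  · set c := sSup T with hcdef
    obtain ⟨a, ha⟩ := hne
    have hc0 : 0 < c := lt_of_lt_of_le (hT ha) (le_csSup hbdd ha)
    have hIooT : Ioo 0 c ⊆ T := by
      intro y hy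
      obtain ⟨b, hbT, hyb⟩ := exists_lt_of_lt_csSup ⟨a, ha⟩ hy.2
      exact hdc b hbT ⟨hy.1, hyb⟩
    have hTIoc : T ⊆ Ioc 0 c := fun y hy => ⟨hT hy, le_csSup hbdd hy⟩
    have hae : ∀ {f : ℝ → ℝ≥0∞}, T.indicator (fun _ => (1:ℝ≥0∞)) * f
        =ᵐ[volume.restrict (Ioi 0)] (Ioo 0 c).indicator (fun _ => (1:ℝ≥0∞)) * f := by
      intro f
      refine ae_restrict_of_ae ?_
      have hc : volume {c} = 0 := Real.volume_singleton
      have hnec : ∀ᵐ t : ℝ ∂volume, t ≠ c := by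
        rw [ae_iff]
        refine measure_mono_null (fun t ht => ?_) hc
        simpa using not_not.1 ht
      filter_upwards [hnec] with t htc
      have : T.indicator (fun _ => (1:ℝ≥0∞)) t = (Ioo 0 c).indicator (fun _ => (1:ℝ≥0∞)) t := by
        rcases em (t ∈ T) with h | h
        · have : t ∈ Ioo 0 c := ⟨(hT h), lt_of_le_of_ne (hTIoc h).2 htc⟩
          rw [Set.indicator_of_mem h, Set.indicator_of_mem this]
        · have : t ∉ Ioo 0 c := fun hmem => h (hIooT hmem)
          rw [Set.indicator_of_notMem h, Set.indicator_of_notMem this]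
      simp only [Pi.mul_apply, this]
    have e1 : (∫⁻ t in Ioi (0:ℝ), T.indicator (fun _ => (1:ℝ≥0∞)) t) = ENNReal.ofReal c := by
      have := hae (f := fun _ => (1:ℝ≥0∞))
      calc ∫⁻ t in Ioi (0:ℝ), T.indicator (fun _ => (1:ℝ≥0∞)) t
          = ∫⁻ t in Ioi (0:ℝ), (Ioo 0 c).indicator (fun _ => (1:ℝ≥0∞)) t := by
            refine lintegral_congr_ae (this.mono fun t ht => ?_)
            simpa using ht
        _ = (volume.restrict (Ioi 0)) (Ioo 0 c) := by
            rw [← lintegral_indicator_one measurableSet_Ioo]; rfl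
        _ = volume (Ioo 0 c) := by
            rw [Measure.restrict_apply measurableSet_Ioo,
              inter_eq_left.2 (Ioo_subset_Ioi_self)]
        _ = ENNReal.ofReal c := by rw [Real.volume_Ioo, sub_zero]
    have e2 : (∫⁻ t in Ioi (0:ℝ), T.indicator (fun _ => (1:ℝ≥0∞)) t
          * ENNReal.ofReal (p * t ^ (p - 1))) = ENNReal.ofReal (c ^ p) := by
      have := hae (f := fun t => ENNReal.ofReal (p * t ^ (p - 1)))
      calc ∫⁻ t in Ioi (0:ℝ), T.indicator (fun _ => (1:ℝ≥0∞)) t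
            * ENNReal.ofReal (p * t ^ (p - 1))
          = ∫⁻ t in Ioi (0:ℝ), (Ioo 0 c).indicator (fun _ => (1:ℝ≥0∞)) t
            * ENNReal.ofReal (p * t ^ (p - 1)) := by
            refine lintegral_congr_ae (this.mono fun t ht => ?_)
            simpa using ht
        _ = ∫⁻ t in Ioi (0:ℝ), (Ioo 0 c).indicator
              (fun t => ENNReal.ofReal (p * t ^ (p - 1))) t := by
            refine lintegral_congr fun t => ?_
            rcases em (t ∈ Ioo 0 c) with h | h <;> simp [Set.indicator_of_mem,
              Set.indicator_of_notMem, h]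
        _ = ∫⁻ t in Ioo 0 c, ENNReal.ofReal (p * t ^ (p - 1)) := by
            rw [lintegral_indicator measurableSet_Ioo,
              Measure.restrict_restrict measurableSet_Ioo,
              inter_eq_left.2 (Ioo_subset_Ioi_self)]
        _ = ENNReal.ofReal (c ^ p) := lemF hp hc0.le
    rw [e1, e2, ENNReal.ofReal_rpow_of_nonneg hc0.le hp.le]
  · have hTeq : T = Ioi 0 := by
      refine Subset.antisymm hT fun b hb => ?_
      obtain ⟨a, haT, hba⟩ := not_bddAbove_iff.1 hbdd b
      exact hdc a haT ⟨hb, hba⟩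
    subst hTeq
    have e1 : (∫⁻ t in Ioi (0:ℝ), (Ioi (0:ℝ)).indicator (fun _ => (1:ℝ≥0∞)) t) = ⊤ := by
      calc ∫⁻ t in Ioi (0:ℝ), (Ioi (0:ℝ)).indicator (fun _ => (1:ℝ≥0∞)) t
          = (volume.restrict (Ioi 0)) (Ioi (0:ℝ)) := by
            rw [← lintegral_indicator_one measurableSet_Ioi]; rfl
        _ = volume (Ioi (0:ℝ)) := by
            rw [Measure.restrict_apply measurableSet_Ioi, inter_self]
        _ = ⊤ := Real.volume_Ioi
    have e2 : (∫⁻ t in Ioi (0:ℝ), (Ioi (0:ℝ)).indicator (fun _ => (1:ℝ≥0∞)) t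
          * ENNReal.ofReal (p * t ^ (p - 1))) = ⊤ := by
      rw [← lintF_top hp]
      refine lintegral_congr_ae (ae_restrict_of_ae_restrict_of_subset (Subset.refl _) ?_)
      filter_upwards [ae_restrict_mem measurableSet_Ioi] with t ht
      simp [Set.indicator_of_mem ht]
    rw [e1, e2, ENNReal.top_rpow_of_pos hp]

lemma vol_starSet {E : Set (ℝ × ℝ)} (hE : MeasurableSet E) :
    volume (starSet E) = volume E := by
  set g := phiSec E with hgdef
  have hg : Measurable g := measurable_measure_prodMk_left hE
  set d : ℝ≥0∞ → ℝ≥0∞ := fun b => volume {x | b < g x} with hddef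
  have hd : Measurable fun y : ℝ => d (ENNReal.ofReal y) := by
    have hset : MeasurableSet {q : ℝ × ℝ | ENNReal.ofReal q.1 < g q.2} :=
      measurableSet_lt (ENNReal.measurable_ofReal.comp measurable_fst)
        (hg.comp measurable_snd)
    exact measurable_measure_prodMk_left (s := {q : ℝ × ℝ | ENNReal.ofReal q.1 < g q.2}) hset
  have hdanti : ∀ {b b' : ℝ≥0∞}, b ≤ b' → d b' ≤ d b := fun hbb =>
    measure_mono fun x hx => lt_of_le_of_lt hbb hx
  -- measurability of starSet
  have hstar : MeasurableSet (starSet E) := by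
    have heq : starSet E = {p : ℝ × ℝ | 0 < p.1} ∩ ({p : ℝ × ℝ | 0 < p.2} ∩
        ⋃ q : ℚ, ({p : ℝ × ℝ | ENNReal.ofReal p.2 < ENNReal.ofReal (q : ℝ)} ∩
          {p : ℝ × ℝ | ENNReal.ofReal p.1 < d (ENNReal.ofReal (q : ℝ))})) := by
      ext p
      simp only [starSet, mem_setOf_eq, mem_inter_iff, mem_iUnion]
      constructor
      · rintro ⟨h1, h2, h3⟩
        obtain ⟨q, hq0, hq1, hq2⟩ := (lt_decRe_iff_rat volume g p.1 p.2).1 h3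
        exact ⟨h1, h2, q, hq1, hq2⟩
      · rintro ⟨h1, h2, q, hq1, hq2⟩
        have hq0 : 0 < (q : ℝ) := by
          by_contra hq
          push_neg at hq
          rw [ENNReal.ofReal_eq_zero.2 hq] at hq1
          simp at hq1
        exact ⟨h1, h2, (lt_decRe_iff_rat volume g p.1 p.2).2 ⟨q, hq0, hq1, hq2⟩⟩
    rw [heq]
    refine (measurable_fst measurableSet_Ioi).inter
      ((measurable_snd measurableSet_Ioi).inter (MeasurableSet.iUnion fun q => ?_))
    refine MeasurableSet.inter ?_ ?_
    · exact measurableSet_lt (α := ℝ≥0∞) (ENNReal.measurable_ofReal.comp measurable_snd)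
        measurable_const
    · exact measurableSet_lt (α := ℝ≥0∞) (ENNReal.measurable_ofReal.comp measurable_fst)
        measurable_const
  -- the comparison set
  set W : Set (ℝ × ℝ) := {q | 0 < q.2 ∧ ENNReal.ofReal q.1 < d (ENNReal.ofReal q.2)} with hWdef
  have hW : MeasurableSet W := by
    refine (measurable_snd measurableSet_Ioi).inter ?_
    exact measurableSet_lt (α := ℝ≥0∞) (ENNReal.measurable_ofReal.comp measurable_fst)
      (hd.comp measurable_snd)
  -- sections of starSet have same measure as sections of W
  have hsec : ∀ s : ℝ, volume (Prod.mk s ⁻¹' starSet E)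
      = (Ioi (0:ℝ)).indicator (fun s => volume (Prod.mk s ⁻¹' W)) s := by
    intro s
    rcases le_or_gt s 0 with hs | hs
    · have h1 : Prod.mk s ⁻¹' starSet E = ∅ := by
        ext y; simp only [mem_preimage, starSet, mem_setOf_eq, mem_empty_iff_false, iff_false]
        rintro ⟨h, -⟩; exact absurd h hs.not_gt
      rw [h1, Set.indicator_of_notMem (by simpa using hs), measure_empty]
    · rw [Set.indicator_of_mem (by simpa using hs)]
      have h1 : Prod.mk s ⁻¹' starSet E
          = {y : ℝ | 0 < y ∧ ENNReal.ofReal y < decRe volume g s} := by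
        ext y
        simp only [mem_preimage, starSet, mem_setOf_eq]
        exact ⟨fun ⟨_, h2, h3⟩ => ⟨h2, h3⟩, fun ⟨h2, h3⟩ => ⟨hs, h2, h3⟩⟩
      have h2 : Prod.mk s ⁻¹' W
          = {y : ℝ | 0 < y ∧ ENNReal.ofReal s < d (ENNReal.ofReal y)} := rfl
      rw [h1, h2]
      refine vol_sandwich (fun y hy => hy.1) ?_ ?_
      · rintro y ⟨hy0, hy⟩
        obtain ⟨b, hb1, hb2⟩ := (lt_decRe_iff volume g s _).1 hy
        exact ⟨hy0, lt_of_lt_of_le hb2 (hdanti hb1.le)⟩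
      · rintro y ⟨hy0, hy⟩ y' hy'
        refine ⟨hy'.1, (lt_decRe_iff volume g s _).2
          ⟨ENNReal.ofReal y, ?_, hy⟩⟩
        exact (ENNReal.ofReal_lt_ofReal_iff hy0).2 hy'.2
  -- compute volume of starSet
  have hprod : (volume : Measure (ℝ × ℝ)) = (volume : Measure ℝ).prod volume :=
    Measure.volume_eq_prod ℝ ℝ
  calc volume (starSet E)
      = ∫⁻ s, volume (Prod.mk s ⁻¹' starSet E) := by
        rw [hprod, Measure.prod_apply hstar]
    _ = ∫⁻ s, (Ioi (0:ℝ)).indicator (fun s => volume (Prod.mk s ⁻¹' W)) s := by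
        exact lintegral_congr hsec
    _ = ∫⁻ s in Ioi (0:ℝ), volume (Prod.mk s ⁻¹' W) := by
        rw [lintegral_indicator measurableSet_Ioi]
    _ = ((volume.restrict (Ioi (0:ℝ))).prod volume) W := by
        rw [Measure.prod_apply hW]
    _ = ∫⁻ y, (volume.restrict (Ioi (0:ℝ))) ((fun s => (s, y)) ⁻¹' W) := by
        rw [Measure.prod_apply_symm hW]
    _ = ∫⁻ y, (Ioi (0:ℝ)).indicator (fun y => d (ENNReal.ofReal y)) y := by
        refine lintegral_congr fun y => ?_
        rcases le_or_gt y 0 with hy | hy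
        · have h1 : ((fun s => (s, y)) ⁻¹' W) = ∅ := by
            ext s; simp only [mem_preimage, hWdef, mem_setOf_eq, mem_empty_iff_false, iff_false]
            rintro ⟨h, -⟩; exact absurd h hy.not_gt
          rw [h1, Set.indicator_of_notMem (by simpa using hy), measure_empty]
        · rw [Set.indicator_of_mem (by simpa using hy)]
          have h1 : ((fun s => (s, y)) ⁻¹' W) = {s : ℝ | ENNReal.ofReal s < d (ENNReal.ofReal y)} := by
            ext s
            simp only [mem_preimage, hWdef, mem_setOf_eq]
            exact ⟨fun ⟨_, h⟩ => h, fun h => ⟨hy, h⟩⟩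
          rw [h1, Measure.restrict_apply
            (measurableSet_lt (α := ℝ≥0∞) ENNReal.measurable_ofReal measurable_const)]
          rw [show {s : ℝ | ENNReal.ofReal s < d (ENNReal.ofReal y)} ∩ Ioi 0
              = {s : ℝ | 0 < s ∧ ENNReal.ofReal s < d (ENNReal.ofReal y)} by
            ext s; simp [mem_setOf_eq, and_comm]]
          exact vol_slice _
    _ = ∫⁻ y in Ioi (0:ℝ), d (ENNReal.ofReal y) := by
        rw [lintegral_indicator measurableSet_Ioi]
    _ = volume E := by
      -- reverse computation for E
      set V : Set (ℝ × ℝ) := {q | 0 < q.2 ∧ ENNReal.ofReal q.2 < g q.1} with hVdef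
      have hV : MeasurableSet V := by
        refine (measurable_snd measurableSet_Ioi).inter ?_
        exact measurableSet_lt (α := ℝ≥0∞) (ENNReal.measurable_ofReal.comp measurable_snd)
          (hg.comp measurable_fst)
      have e1 : volume E = ∫⁻ x, g x := by
        rw [hprod, Measure.prod_apply hE]; rfl
      rw [e1]
      refine Eq.symm ?_
      calc ∫⁻ x, g x
          = ∫⁻ x, volume (Prod.mk x ⁻¹' V) := by
            refine lintegral_congr fun x => ?_
            have h1 : Prod.mk x ⁻¹' V = {y : ℝ | 0 < y ∧ ENNReal.ofReal y < g x} := rfl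
            rw [h1, vol_slice]
        _ = ((volume : Measure ℝ).prod volume) V := (Measure.prod_apply hV).symm
        _ = ∫⁻ y, volume ((fun x => (x, y)) ⁻¹' V) := Measure.prod_apply_symm hV
        _ = ∫⁻ y, (Ioi (0:ℝ)).indicator (fun y => d (ENNReal.ofReal y)) y := by
            refine lintegral_congr fun y => ?_
            rcases le_or_gt y 0 with hy | hy
            · have h1 : ((fun x => (x, y)) ⁻¹' V) = ∅ := by
                ext x; simp only [mem_preimage, hVdef, mem_setOf_eq, mem_empty_iff_false,
                  iff_false]
                rintro ⟨h, -⟩; exact absurd h hy.not_gt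
              rw [h1, Set.indicator_of_notMem (by simpa using hy), measure_empty]
            · rw [Set.indicator_of_mem (by simpa using hy)]
              have h1 : ((fun x => (x, y)) ⁻¹' V) = {x : ℝ | ENNReal.ofReal y < g x} := by
                ext x
                simp only [mem_preimage, hVdef, mem_setOf_eq]
                exact ⟨fun ⟨_, h⟩ => h, fun h => ⟨hy, h⟩⟩
              rw [h1]
        _ = ∫⁻ y in Ioi (0:ℝ), d (ENNReal.ofReal y) := by
            rw [lintegral_indicator measurableSet_Ioi]

theorem stmt18 (f : ℝ × ℝ → ℝ) (hf : Measurable f) (p : ℝ) (hp : 0 < p) :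
    ∫⁻ x, ENNReal.ofReal |f x| ^ p = ∫⁻ x in Quad, rearr2 f x ^ p := by
  set w : ℝ → ℝ≥0∞ := fun t => ENNReal.ofReal (p * t ^ (p - 1)) with hwdef
  have hw : Measurable w := by
    rw [hwdef]; fun_prop
  set E : ℝ → Set (ℝ × ℝ) := fun t => {q | t < |f q|} with hEdef
  have hEm : ∀ t, MeasurableSet (E t) := fun t =>
    measurableSet_lt measurable_const hf.abs
  have hEanti : ∀ {t t' : ℝ}, t ≤ t' → E t' ⊆ E t := fun h q hq => lt_of_le_of_lt h hq
  set A : ℝ → Set (ℝ × ℝ) := fun t => starSet (E t) with hAdef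
  have hAsub : ∀ t, A t ⊆ Quad := fun t q hq => ⟨hq.1, hq.2.1⟩
  have hAanti : ∀ {t t' : ℝ}, t ≤ t' → A t' ⊆ A t := by
    intro t t' h q hq
    refine ⟨hq.1, hq.2.1, lt_of_lt_of_le hq.2.2 ?_⟩
    refine sInf_le_sInf fun l hl => ?_
    refine le_trans (measure_mono fun x hx => ?_) hl
    have hphile : phiSec (E t') x ≤ phiSec (E t) x :=
      measure_mono fun y hy => hEanti h hy
    exact lt_of_lt_of_le (show l < phiSec (E t') x from hx) hphile
  -- joint measurability of φ
  have hphi : Measurable fun q : ℝ × ℝ => phiSec (E q.1) q.2 := by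
    have hH : MeasurableSet {r : (ℝ × ℝ) × ℝ | r.1.1 < |f (r.1.2, r.2)|} :=
      measurableSet_lt measurable_fst.fst
        ((hf.comp (measurable_fst.snd.prodMk measurable_snd)).abs)
    exact measurable_measure_prodMk_left hH
  have hdq : ∀ q : ℚ, Measurable fun t : ℝ =>
      volume {x : ℝ | ENNReal.ofReal (q:ℝ) < phiSec (E t) x} := by
    intro q
    have hset : MeasurableSet {r : ℝ × ℝ | ENNReal.ofReal (q:ℝ) < phiSec (E r.1) r.2} :=
      measurableSet_lt (α := ℝ≥0∞) measurable_const hphi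
    exact measurable_measure_prodMk_left hset
  have hAjoint : MeasurableSet {r : ℝ × (ℝ × ℝ) | r.2 ∈ A r.1} := by
    have heq : {r : ℝ × (ℝ × ℝ) | r.2 ∈ A r.1}
        = {r : ℝ × (ℝ × ℝ) | 0 < r.2.1} ∩ ({r : ℝ × (ℝ × ℝ) | 0 < r.2.2} ∩
          ⋃ q : ℚ, ({r : ℝ × (ℝ × ℝ) | ENNReal.ofReal r.2.2 < ENNReal.ofReal (q:ℝ)} ∩
            {r : ℝ × (ℝ × ℝ) | ENNReal.ofReal r.2.1
              < volume {x : ℝ | ENNReal.ofReal (q:ℝ) < phiSec (E r.1) x}})) := by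
      ext r
      simp only [hAdef, starSet, mem_setOf_eq, mem_inter_iff, mem_iUnion]
      constructor
      · rintro ⟨h1, h2, h3⟩
        obtain ⟨q, hq0, hq1, hq2⟩ := (lt_decRe_iff_rat volume _ _ _).1 h3
        exact ⟨h1, h2, q, hq1, hq2⟩
      · rintro ⟨h1, h2, q, hq1, hq2⟩
        have hq0 : 0 < (q:ℝ) := by
          by_contra hq
          push_neg at hq
          rw [ENNReal.ofReal_eq_zero.2 hq] at hq1
          simp at hq1
        exact ⟨h1, h2, (lt_decRe_iff_rat volume _ _ _).2 ⟨q, hq0, hq1, hq2⟩⟩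
    rw [heq]
    refine (measurable_snd.fst measurableSet_Ioi).inter
      ((measurable_snd.snd measurableSet_Ioi).inter (MeasurableSet.iUnion fun q => ?_))
    refine MeasurableSet.inter ?_ ?_
    · exact measurableSet_lt (α := ℝ≥0∞) (ENNReal.measurable_ofReal.comp measurable_snd.snd)
        measurable_const
    · exact measurableSet_lt (α := ℝ≥0∞) (ENNReal.measurable_ofReal.comp measurable_snd.fst)
        ((hdq q).comp measurable_fst)
  have hAm : ∀ t, MeasurableSet (A t) := fun t =>
    hAjoint.preimage measurable_prodMk_left
  -- pointwise identities
  have stepL : ∀ x : ℝ × ℝ, ENNReal.ofReal |f x| ^ p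
      = ∫⁻ t in Ioi (0:ℝ), (E t).indicator (fun _ => (1:ℝ≥0∞)) x * w t := by
    intro x
    have hB := lemB hp (T := Ioo 0 |f x|) Ioo_subset_Ioi_self
      (fun a ha t ht => ⟨ht.1, ht.2.trans ha.2⟩)
    have e1 : ∫⁻ t in Ioi (0:ℝ), (Ioo 0 |f x|).indicator (fun _ => (1:ℝ≥0∞)) t
        = ENNReal.ofReal |f x| := by
      calc ∫⁻ t in Ioi (0:ℝ), (Ioo 0 |f x|).indicator (fun _ => (1:ℝ≥0∞)) t
          = (volume.restrict (Ioi 0)) (Ioo 0 |f x|) := by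
            rw [← lintegral_indicator_one measurableSet_Ioo]; rfl
        _ = volume (Ioo 0 |f x|) := by
            rw [Measure.restrict_apply measurableSet_Ioo,
              inter_eq_left.2 Ioo_subset_Ioi_self]
        _ = ENNReal.ofReal |f x| := by rw [Real.volume_Ioo, sub_zero]
    have e2 : ∀ t ∈ Ioi (0:ℝ), (Ioo 0 |f x|).indicator (fun _ => (1:ℝ≥0∞)) t
        = (E t).indicator (fun _ => (1:ℝ≥0∞)) x := by
      intro t ht
      have hiff : t ∈ Ioo 0 |f x| ↔ x ∈ E t := ⟨fun h => h.2, fun h => ⟨ht, h⟩⟩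
      by_cases h : x ∈ E t
      · rw [Set.indicator_of_mem (hiff.2 h), Set.indicator_of_mem h]
      · rw [Set.indicator_of_notMem (fun hh => h (hiff.1 hh)), Set.indicator_of_notMem h]
    calc ENNReal.ofReal |f x| ^ p
        = (∫⁻ t in Ioi (0:ℝ), (Ioo 0 |f x|).indicator (fun _ => (1:ℝ≥0∞)) t) ^ p := by
          rw [e1]
      _ = ∫⁻ t in Ioi (0:ℝ), (Ioo 0 |f x|).indicator (fun _ => (1:ℝ≥0∞)) t * w t := hB
      _ = ∫⁻ t in Ioi (0:ℝ), (E t).indicator (fun _ => (1:ℝ≥0∞)) x * w t := by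
          refine setLIntegral_congr_fun measurableSet_Ioi (fun t ht => ?_)
          rw [e2 t ht]
  have stepR : ∀ x : ℝ × ℝ, rearr2 f x ^ p
      = ∫⁻ t in Ioi (0:ℝ), (A t).indicator (fun _ => (1:ℝ≥0∞)) x * w t := by
    intro x
    set T := {t : ℝ | 0 < t ∧ x ∈ A t} with hTdef
    have hTsub : T ⊆ Ioi 0 := fun t ht => ht.1
    have hTdc : ∀ a ∈ T, Ioo 0 a ⊆ T := fun a ha t ht => ⟨ht.1, hAanti ht.2.le ha.2⟩
    have hB := lemB hp hTsub hTdc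
    have e2 : ∀ t ∈ Ioi (0:ℝ), T.indicator (fun _ => (1:ℝ≥0∞)) t
        = (A t).indicator (fun _ => (1:ℝ≥0∞)) x := by
      intro t ht
      have hiff : t ∈ T ↔ x ∈ A t := ⟨fun h => h.2, fun h => ⟨ht, h⟩⟩
      by_cases h : x ∈ A t
      · rw [Set.indicator_of_mem (hiff.2 h), Set.indicator_of_mem h]
      · rw [Set.indicator_of_notMem (fun hh => h (hiff.1 hh)), Set.indicator_of_notMem h]
    have e1 : rearr2 f x = ∫⁻ t in Ioi (0:ℝ), T.indicator (fun _ => (1:ℝ≥0∞)) t := by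
      rw [rearr2]
      refine setLIntegral_congr_fun measurableSet_Ioi (fun t ht => ?_)
      exact (e2 t ht).symm
    rw [e1, hB]
    refine setLIntegral_congr_fun measurableSet_Ioi (fun t ht => ?_)
    rw [e2 t ht]
  -- assemble
  calc ∫⁻ x, ENNReal.ofReal |f x| ^ p
      = ∫⁻ x, ∫⁻ t in Ioi (0:ℝ), (E t).indicator (fun _ => (1:ℝ≥0∞)) x * w t :=
        lintegral_congr stepL
    _ = ∫⁻ t in Ioi (0:ℝ), ∫⁻ x, (E t).indicator (fun _ => (1:ℝ≥0∞)) x * w t := by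
        refine lintegral_lintegral_swap ?_
        have hset : MeasurableSet {r : (ℝ × ℝ) × ℝ | r.2 < |f r.1|} :=
          measurableSet_lt measurable_snd (hf.comp measurable_fst).abs
        have heq : Function.uncurry
            (fun (x : ℝ × ℝ) (t : ℝ) => (E t).indicator (fun _ => (1:ℝ≥0∞)) x * w t)
            = fun r : (ℝ × ℝ) × ℝ =>
              ({r : (ℝ × ℝ) × ℝ | r.2 < |f r.1|}).indicator (fun _ => (1:ℝ≥0∞)) r * w r.2 := by
          ext r
          rcases em (r.2 < |f r.1|) with h | h
          · rw [Function.uncurry]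
            simp only [Set.indicator_of_mem (show r.1 ∈ E r.2 from h),
              Set.indicator_of_mem (show r ∈ {r : (ℝ × ℝ) × ℝ | r.2 < |f r.1|} from h)]
          · rw [Function.uncurry]
            simp only [Set.indicator_of_notMem (show r.1 ∉ E r.2 from h),
              Set.indicator_of_notMem (show r ∉ {r : (ℝ × ℝ) × ℝ | r.2 < |f r.1|} from h)]
        rw [heq]
        exact ((measurable_one.indicator hset).mul (hw.comp measurable_snd)).aemeasurable
    _ = ∫⁻ t in Ioi (0:ℝ), volume (E t) * w t := by
        refine lintegral_congr fun t => ?_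
        rw [lintegral_mul_const _ (measurable_const.indicator (hEm t)),
          lintegral_indicator (hEm t), setLIntegral_one]
    _ = ∫⁻ t in Ioi (0:ℝ), volume (A t) * w t := by
        refine lintegral_congr fun t => ?_
        rw [show volume (A t) = volume (E t) from vol_starSet (hEm t)]
    _ = ∫⁻ t in Ioi (0:ℝ), ∫⁻ x in Quad, (A t).indicator (fun _ => (1:ℝ≥0∞)) x * w t := by
        refine lintegral_congr fun t => ?_
        refine Eq.symm ?_
        rw [lintegral_mul_const _ (measurable_const.indicator (hAm t)),
          lintegral_indicator (hAm t), setLIntegral_one,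
          Measure.restrict_apply (hAm t), inter_eq_left.2 (hAsub t)]
    _ = ∫⁻ x in Quad, ∫⁻ t in Ioi (0:ℝ), (A t).indicator (fun _ => (1:ℝ≥0∞)) x * w t := by
        refine (lintegral_lintegral_swap ?_).symm
        have hset : MeasurableSet {r : (ℝ × ℝ) × ℝ | r.1 ∈ A r.2} :=
          hAjoint.preimage measurable_swap
        have heq : Function.uncurry
            (fun (x : ℝ × ℝ) (t : ℝ) => (A t).indicator (fun _ => (1:ℝ≥0∞)) x * w t)
            = fun r : (ℝ × ℝ) × ℝ =>
              ({r : (ℝ × ℝ) × ℝ | r.1 ∈ A r.2}).indicator (fun _ => (1:ℝ≥0∞)) r * w r.2 := by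
          ext r
          rcases em (r.1 ∈ A r.2) with h | h
          · rw [Function.uncurry]
            simp only [Set.indicator_of_mem h,
              Set.indicator_of_mem (show r ∈ {r : (ℝ × ℝ) × ℝ | r.1 ∈ A r.2} from h)]
          · rw [Function.uncurry]
            simp only [Set.indicator_of_notMem h,
              Set.indicator_of_notMem (show r ∉ {r : (ℝ × ℝ) × ℝ | r.1 ∈ A r.2} from h)]
        rw [heq]
        exact ((measurable_one.indicator hset).mul (hw.comp measurable_snd)).aemeasurable
    _ = ∫⁻ x in Quad, rearr2 f x ^ p := lintegral_congr fun x => (stepR x).symm
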